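/- arXiv:2202.05246 — 3 statements merged into one kernel-verified Lean document; each statement's English description precedes it below -/
import Mathlib

section
/- Assume the mapping h ↦ B_h is a successful base class with uniform convergence rate e(n) and constant α, and let η_n = 1/(2√n) and ε_n = √(ln(64n)/n) + 2e(n). Then condition (C2) holds with c(n) = 2η_n + 3ε_n: for every distribution D, every n, and all hypotheses h_0, h_1, E_{S∼D^n}[LR_n(U(h_0,h_1,S))] ≤ Err_D(h_1) + 2η_n + 3ε_n. -/
open MeasureTheory Finset Filter

noncomputable section

set_option linter.unusedSectionVars false

variable {X : Type*} [MeasurableSpace X] {k : ℕ}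

/-- Population (true) loss of hypothesis `h` under distribution `D`. -/
def errD (D : Measure (X × Fin k)) (h : X → Fin k) : ℝ :=
  (D {p | h p.1 ≠ p.2}).toReal

/-- Empirical loss of `h` on the sample `S`. -/
def errS {n : ℕ} (S : Fin n → X × Fin k) (h : X → Fin k) : ℝ :=
  ((Finset.univ.filter fun i => h (S i).1 ≠ (S i).2).card : ℝ) / n

/-- Expected value of `φ` under the PMF `μ`. -/
def pmfExp {H : Type*} (μ : PMF H) (φ : H → ℝ) : ℝ := ∑' f, (μ f).toReal * φ f

open scoped Classical in
/-- The set of empirical risk minimizers in `B` with respect to the sample `S`. -/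
def ermSet {n : ℕ} (B : Finset (X → Fin k)) (S : Fin n → X × Fin k) :
    Finset (X → Fin k) :=
  B.filter fun f => ∀ g ∈ B, errS S f ≤ errS S g

theorem ermSet_nonempty {n : ℕ} (B : Finset (X → Fin k)) (hB : B.Nonempty)
    (S : Fin n → X × Fin k) : (ermSet B S).Nonempty := by
  classical
  obtain ⟨f, hf, hmin⟩ := Finset.exists_min_image B (errS S) hB
  refine ⟨f, ?_⟩
  simp only [ermSet, Finset.mem_filter]
  exact ⟨hf, hmin⟩

/-- The randomized ERM `G(h,S)`: a uniformly random empirical risk minimizer in `B`.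
(On the empty sample all empirical losses are `0`, so this is uniform on `B`.) -/
def ermPMF {n : ℕ} (B : Finset (X → Fin k)) (hB : B.Nonempty)
    (S : Fin n → X × Fin k) : PMF (X → Fin k) :=
  PMF.uniformOfFinset (ermSet B S) (ermSet_nonempty B hB S)

/-- `LG D B hB n = E_{S ∼ D^n} E[Err_D (G(h,S))]`: the expected population loss of the
randomized ERM over `B` trained on `n` i.i.d. examples from `D`. -/
def LG (D : Measure (X × Fin k)) (B : Finset (X → Fin k)) (hB : B.Nonempty) (n : ℕ) : ℝ :=
  ∫ S, pmfExp (ermPMF B hB S) (errD D) ∂(Measure.pi fun _ : Fin n => D)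

/-- `LR_n(h) = (1 - η_n)·LG_n(h) + η_n·LG_0(h)`: the expected population loss of the
regularization algorithm `R`, which outputs `G(h,S)` with probability `1 - η_n` and
`G(h,∅)` with probability `η_n` (note `LG_0(h) = α`). -/
def LRc (η : ℕ → ℝ) (D : Measure (X × Fin k)) (B : (X → Fin k) → Finset (X → Fin k))
    (hB : ∀ h, h ∈ B h) (n : ℕ) (h : X → Fin k) : ℝ :=
  (1 - η n) * LG D (B h) ⟨h, hB h⟩ n + η n * LG D (B h) ⟨h, hB h⟩ 0

open scoped Classical in
/-- The update algorithm `U`: given the current hypothesis `h0`, the candidate `h1`, and a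
sample `S`, output `h0` if `min_{f ∈ B h0} Err_S(f) < min_{f ∈ B h1} Err_S(f) + ε`, and
output `h1` otherwise. -/
def update {n : ℕ} (B : (X → Fin k) → Finset (X → Fin k)) (hB : ∀ h, h ∈ B h)
    (ε : ℝ) (h0 h1 : X → Fin k) (S : Fin n → X × Fin k) : X → Fin k :=
  if (B h0).inf' ⟨h0, hB h0⟩ (errS S) < (B h1).inf' ⟨h1, hB h1⟩ (errS S) + ε then h0
  else h1

/-- The regularization parameter `η_n = 1/(2√n)`. -/
def ηp (n : ℕ) : ℝ := 1 / (2 * Real.sqrt n)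

/-- The deviation parameter `u_n = √(ln(64 n)/n)`. -/
def up (n : ℕ) : ℝ := Real.sqrt (Real.log (64 * n) / n)

/-- The update threshold `ε_n = √(ln(64 n)/n) + 2 e(n)`. -/
def εp (e : ℕ → ℝ) (n : ℕ) : ℝ := up n + 2 * e n


section AuxLemmas

variable {X : Type*} [MeasurableSpace X] {k : ℕ}

lemma errS_nonneg {n : ℕ} (S : Fin n → X × Fin k) (h : X → Fin k) : 0 ≤ errS S h := by
  unfold errS; positivity

lemma errS_le_one {n : ℕ} (S : Fin n → X × Fin k) (h : X → Fin k) : errS S h ≤ 1 := by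
  classical
  unfold errS
  rcases Nat.eq_zero_or_pos n with h0 | h0
  · subst h0; simp
  · rw [div_le_one (by exact_mod_cast h0)]
    exact_mod_cast (Finset.card_filter_le _ _).trans_eq (by simp)

lemma errD_nonneg (D : Measure (X × Fin k)) (h : X → Fin k) : 0 ≤ errD D h :=
  ENNReal.toReal_nonneg

lemma errD_le_one (D : Measure (X × Fin k)) [IsProbabilityMeasure D] (h : X → Fin k) :
    errD D h ≤ 1 := by
  unfold errD
  exact ENNReal.toReal_le_of_le_ofReal one_pos.le (by simpa using prob_le_one (μ := D))

lemma measurable_errS {n : ℕ} {f : X → Fin k} (hf : Measurable f) :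
    Measurable (fun S : Fin n → X × Fin k => errS S f) := by
  classical
  have hset : ∀ i : Fin n, MeasurableSet {S : Fin n → X × Fin k | f (S i).1 ≠ (S i).2} := by
    intro i
    have hm : Measurable (fun S : Fin n → X × Fin k => (f (S i).1, (S i).2)) :=
      ((hf.comp (measurable_fst.comp (measurable_pi_apply i)))).prodMk
        (measurable_snd.comp (measurable_pi_apply i))
    have heq : {S : Fin n → X × Fin k | f (S i).1 ≠ (S i).2}
        = (fun S : Fin n → X × Fin k => (f (S i).1, (S i).2)) ⁻¹' {q | q.1 ≠ q.2} := rfl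
    rw [heq]
    exact hm ((Set.to_countable _).measurableSet)
  have heq : (fun S : Fin n → X × Fin k => errS S f)
      = fun S => (∑ i : Fin n, if f (S i).1 ≠ (S i).2 then (1:ℝ) else 0) / n := by
    funext S
    unfold errS
    congr 1
    rw [Finset.card_filter]
    push_cast
    rfl
  rw [heq]
  exact (Finset.measurable_sum _ (fun i _ => Measurable.ite (hset i) measurable_const
    measurable_const)).div_const _

/-- `pmfExp` of the uniform PMF on a nonempty finset, as a finite sum. -/
lemma pmfExp_uniformOfFinset {H : Type*} (T : Finset H) (hT : T.Nonempty) (φ : H → ℝ) :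
    pmfExp (PMF.uniformOfFinset T hT) φ = ∑ f ∈ T, (T.card : ℝ)⁻¹ * φ f := by
  classical
  unfold pmfExp
  rw [tsum_eq_sum (s := T) (fun b hb => by
    simp [PMF.uniformOfFinset_apply, hb])]
  refine Finset.sum_congr rfl fun f hf => ?_
  rw [PMF.uniformOfFinset_apply, if_pos hf]
  congr 1
  rw [ENNReal.toReal_inv]
  simp

lemma pmfExp_uniform_le {H : Type*} (T : Finset H) (hT : T.Nonempty) (φ : H → ℝ) {c : ℝ}
    (hc : ∀ f ∈ T, φ f ≤ c) : pmfExp (PMF.uniformOfFinset T hT) φ ≤ c := by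
  rw [pmfExp_uniformOfFinset]
  have hcard : (0:ℝ) < T.card := by exact_mod_cast Finset.card_pos.2 hT
  calc ∑ f ∈ T, (T.card : ℝ)⁻¹ * φ f ≤ ∑ f ∈ T, (T.card : ℝ)⁻¹ * c :=
        Finset.sum_le_sum fun f hf =>
          mul_le_mul_of_nonneg_left (hc f hf) (inv_nonneg.2 hcard.le)
    _ = c := by
        rw [Finset.sum_const, nsmul_eq_mul]
        field_simp

lemma pmfExp_uniform_nonneg {H : Type*} (T : Finset H) (hT : T.Nonempty) (φ : H → ℝ)
    (hc : ∀ f ∈ T, 0 ≤ φ f) : 0 ≤ pmfExp (PMF.uniformOfFinset T hT) φ := by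
  rw [pmfExp_uniformOfFinset]
  exact Finset.sum_nonneg fun f hf => mul_nonneg (by positivity) (hc f hf)

lemma pmfExp_ermPMF_le {n : ℕ} (B : Finset (X → Fin k)) (hB : B.Nonempty)
    (S : Fin n → X × Fin k) (φ : (X → Fin k) → ℝ) {c : ℝ}
    (hc : ∀ f ∈ ermSet B S, φ f ≤ c) : pmfExp (ermPMF B hB S) φ ≤ c :=
  pmfExp_uniform_le _ _ _ hc

lemma pmfExp_ermPMF_nonneg {n : ℕ} (B : Finset (X → Fin k)) (hB : B.Nonempty)
    (S : Fin n → X × Fin k) (φ : (X → Fin k) → ℝ)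
    (hc : ∀ f ∈ ermSet B S, 0 ≤ φ f) : 0 ≤ pmfExp (ermPMF B hB S) φ :=
  pmfExp_uniform_nonneg _ _ _ hc

lemma LG_nonneg (D : Measure (X × Fin k)) (B : Finset (X → Fin k)) (hB : B.Nonempty) (n : ℕ) :
    0 ≤ LG D B hB n := by
  refine integral_nonneg fun S => ?_
  exact pmfExp_ermPMF_nonneg B hB S _ fun f _ => errD_nonneg D f

lemma LG_le_one (D : Measure (X × Fin k)) [IsProbabilityMeasure D] (B : Finset (X → Fin k))
    (hB : B.Nonempty) (n : ℕ) : LG D B hB n ≤ 1 := by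
  have h := norm_integral_le_of_norm_le_const (μ := Measure.pi fun _ : Fin n => D)
    (f := fun S => pmfExp (ermPMF B hB S) (errD D)) (C := 1)
    (Filter.Eventually.of_forall fun S => by
      rw [Real.norm_eq_abs, abs_le]
      constructor
      · linarith [pmfExp_ermPMF_nonneg B hB S (errD D) (fun f _ => errD_nonneg D f)]
      · exact pmfExp_ermPMF_le B hB S _ fun f _ => errD_le_one D f)
  rw [probReal_univ, mul_one] at h
  exact (le_abs_self _).trans ((Real.norm_eq_abs _) ▸ h)

lemma mem_of_mem_ermSet {n : ℕ} {B : Finset (X → Fin k)} {S : Fin n → X × Fin k}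
    {f : X → Fin k} (hf : f ∈ ermSet B S) : f ∈ B := by
  classical
  exact (Finset.mem_filter.1 hf).1

lemma ermSet_min {n : ℕ} {B : Finset (X → Fin k)} {S : Fin n → X × Fin k}
    {f : X → Fin k} (hf : f ∈ ermSet B S) : ∀ g ∈ B, errS S f ≤ errS S g := by
  classical
  exact (Finset.mem_filter.1 hf).2

/-- The key per-class bound: `LG_n(B) ≤ min_{g ∈ B} Err_D(g) + 2 ∫ sup-deviation`. -/
lemma LG_le_inf_add (D : Measure (X × Fin k)) [IsProbabilityMeasure D]
    (B : Finset (X → Fin k)) (hB : B.Nonempty) (hBm : ∀ f ∈ B, Measurable f) (n : ℕ) :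
    LG D B hB n ≤ B.inf' hB (errD D) +
      2 * ∫ S, B.sup' hB (fun f => |errS S f - errD D f|)
        ∂(Measure.pi fun _ : Fin n => D) := by
  set μ := Measure.pi fun _ : Fin n => D with hμ
  haveI : IsProbabilityMeasure μ := by rw [hμ]; infer_instance
  set dev : (Fin n → X × Fin k) → ℝ :=
    fun S => B.sup' hB (fun f => |errS S f - errD D f|) with hdev
  have hdev_nonneg : ∀ S, 0 ≤ dev S := by
    intro S
    simp only [hdev]
    exact le_trans (abs_nonneg _)
      (Finset.le_sup' (fun f => |errS S f - errD D f|) hB.choose_spec)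
  have hdev_meas : Measurable dev := by
    have : dev = B.sup' hB (fun f S => |errS S f - errD D f|) := by
      funext S
      rw [hdev]
      simp [Finset.sup'_apply]
    rw [this]
    exact Finset.measurable_sup' hB fun f hf =>
      ((measurable_errS (hBm f hf)).sub measurable_const).abs
  have hdev_int : Integrable dev μ := by
    refine Integrable.mono' (integrable_const 2) hdev_meas.aestronglyMeasurable
      (Filter.Eventually.of_forall fun S => ?_)
    rw [Real.norm_eq_abs, abs_of_nonneg (hdev_nonneg S)]
    refine Finset.sup'_le _ _ fun f hf => ?_
    have h1 := errS_nonneg S f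
    have h2 := errS_le_one S f
    have h3 := errD_nonneg D f
    have h4 := errD_le_one D f
    rw [abs_le]; constructor <;> linarith
  -- pointwise bound
  have hpt : ∀ S, pmfExp (ermPMF B hB S) (errD D) ≤ B.inf' hB (errD D) + 2 * dev S := by
    intro S
    refine pmfExp_ermPMF_le B hB S _ fun f hf => ?_
    obtain ⟨g, hg, hgeq⟩ := Finset.exists_mem_eq_inf' hB (errD D)
    have hfB := mem_of_mem_ermSet hf
    have h1 : errD D f ≤ errS S f + dev S := by
      have := Finset.le_sup' (fun f => |errS S f - errD D f|) hfB
      rw [hdev]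
      have habs : errD D f - errS S f ≤ |errS S f - errD D f| := by
        rw [abs_sub_comm]; exact le_abs_self _
      linarith
    have h2 : errS S f ≤ errS S g := ermSet_min hf g hg
    have h3 : errS S g ≤ errD D g + dev S := by
      have := Finset.le_sup' (fun f => |errS S f - errD D f|) hg
      have habs : errS S g - errD D g ≤ |errS S g - errD D g| := le_abs_self _
      rw [hdev]
      linarith
    rw [hgeq]
    linarith
  by_cases hint : Integrable (fun S => pmfExp (ermPMF B hB S) (errD D)) μ
  · have hint2 : Integrable (fun S => B.inf' hB (errD D) + 2 * dev S) μ :=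
      (integrable_const _).add (hdev_int.const_mul 2)
    calc LG D B hB n ≤ ∫ S, (B.inf' hB (errD D) + 2 * dev S) ∂μ :=
          integral_mono hint hint2 hpt
      _ = B.inf' hB (errD D) + 2 * ∫ S, dev S ∂μ := by
          rw [integral_add (integrable_const _) (hdev_int.const_mul 2), integral_const,
            probReal_univ, smul_eq_mul, one_mul, integral_const_mul]
  · unfold LG
    rw [← hμ, integral_undef hint]
    have h1 : 0 ≤ B.inf' hB (errD D) := by
      obtain ⟨g, hg, hgeq⟩ := Finset.exists_mem_eq_inf' hB (errD D)
      rw [hgeq]; exact errD_nonneg D g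
    have h2 : 0 ≤ ∫ S, dev S ∂μ := integral_nonneg hdev_nonneg
    linarith

lemma ηp_nonneg (n : ℕ) : 0 ≤ ηp n := by
  unfold ηp
  positivity

lemma up_nonneg (n : ℕ) : 0 ≤ up n := Real.sqrt_nonneg _

end AuxLemmas

/-- **Condition (C2) holds with `c(n) = 2 η_n + 3 ε_n`** (Lemma 2.8).  If `h ↦ B h` is a
successful base class with uniform convergence rate `e(n)` and constant `α`, and
`η_n = 1/(2√n)`, `ε_n = √(ln(64 n)/n) + 2 e(n)`, then for every distribution `D`, every `n`
and all hypotheses `h0, h1`: `E_{S∼D^n}[LR_n(U(h0,h1,S))] ≤ Err_D(h1) + 2 η_n + 3 ε_n`. -/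
theorem condition_C2_holds
    (B : (X → Fin k) → Finset (X → Fin k)) (hB : ∀ h, h ∈ B h)
    (hBmeas : ∀ h f, f ∈ B h → Measurable f)
    (e : ℕ → ℝ) (helim : Tendsto e atTop (nhds 0))
    (α : Measure (X × Fin k) → ℝ)
    -- (i) the loss of the randomized ERM over `B h` is monotone
    (hmono : ∀ D : Measure (X × Fin k), IsProbabilityMeasure D → ∀ h n,
      LG D (B h) ⟨h, hB h⟩ (n + 1) ≤ LG D (B h) ⟨h, hB h⟩ n)
    -- (ii) `B h` satisfies uniform convergence with rate `e n`
    (hUC : ∀ D : Measure (X × Fin k), IsProbabilityMeasure D → ∀ h n,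
      ∫ S, (B h).sup' ⟨h, hB h⟩ (fun f => |errS S f - errD D f|)
        ∂(Measure.pi fun _ : Fin n => D) ≤ e n)
    -- (iii) on the empty sample the loss is a constant `α` independent of `h`
    (hα : ∀ D : Measure (X × Fin k), IsProbabilityMeasure D → ∀ h,
      LG D (B h) ⟨h, hB h⟩ 0 = α D) :
    ∀ D : Measure (X × Fin k), IsProbabilityMeasure D → ∀ n h0 h1,
      ∫ S, LRc ηp D B hB n (update B hB (εp e n) h0 h1 S)
          ∂(Measure.pi fun _ : Fin n => D) ≤
        errD D h1 + (2 * ηp n + 3 * εp e n) := by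
  intro D hD n h0 h1
  classical
  set μ := Measure.pi fun _ : Fin n => D with hμ
  haveI : IsProbabilityMeasure μ := by rw [hμ]; infer_instance
  set dev0 : (Fin n → X × Fin k) → ℝ :=
    fun S => (B h0).sup' ⟨h0, hB h0⟩ (fun f => |errS S f - errD D f|) with hdev0
  set dev1 : (Fin n → X × Fin k) → ℝ :=
    fun S => (B h1).sup' ⟨h1, hB h1⟩ (fun f => |errS S f - errD D f|) with hdev1
  have hdev0_nonneg : ∀ S, 0 ≤ dev0 S := by
    intro S
    simp only [hdev0]
    exact le_trans (abs_nonneg _) (Finset.le_sup' (fun f => |errS S f - errD D f|) (hB h0))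
  have hdev1_nonneg : ∀ S, 0 ≤ dev1 S := by
    intro S
    simp only [hdev1]
    exact le_trans (abs_nonneg _) (Finset.le_sup' (fun f => |errS S f - errD D f|) (hB h1))
  have hdev_meas : ∀ h : X → Fin k, Measurable (fun S : Fin n → X × Fin k =>
      (B h).sup' ⟨h, hB h⟩ (fun f => |errS S f - errD D f|)) := by
    intro h
    have heq : (fun S : Fin n → X × Fin k =>
        (B h).sup' ⟨h, hB h⟩ (fun f => |errS S f - errD D f|))
        = (B h).sup' ⟨h, hB h⟩ (fun f S => |errS S f - errD D f|) := by
      funext S; exact (Finset.sup'_apply (C := fun _ : Fin n → X × Fin k => ℝ) ⟨h, hB h⟩ (fun f S => |errS S f - errD D f|) S).symm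
    rw [heq]
    exact Finset.measurable_sup' _ fun f hf =>
      ((measurable_errS (hBmeas h f hf)).sub measurable_const).abs
  have hdev_int : ∀ h : X → Fin k, Integrable (fun S : Fin n → X × Fin k =>
      (B h).sup' ⟨h, hB h⟩ (fun f => |errS S f - errD D f|)) μ := by
    intro h
    refine Integrable.mono' (integrable_const 2) (hdev_meas h).aestronglyMeasurable
      (Filter.Eventually.of_forall fun S => ?_)
    rw [Real.norm_eq_abs, abs_of_nonneg (le_trans (abs_nonneg _)
      (Finset.le_sup' (fun f => |errS S f - errD D f|) (hB h)))]
    refine Finset.sup'_le _ _ fun f hf => ?_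
    have h1 := errS_nonneg S f
    have h2 := errS_le_one S f
    have h3 := errD_nonneg D f
    have h4 := errD_le_one D f
    rw [abs_le]; constructor <;> linarith
  have hUC0 : ∫ S, dev0 S ∂μ ≤ e n := hUC D hD h0 n
  have hUC1 : ∫ S, dev1 S ∂μ ≤ e n := hUC D hD h1 n
  have he_nonneg : 0 ≤ e n := le_trans (integral_nonneg hdev1_nonneg) hUC1
  have hα01 : 0 ≤ α D ∧ α D ≤ 1 := by
    rw [← hα D hD h1]
    exact ⟨LG_nonneg D (B h1) ⟨h1, hB h1⟩ 0, LG_le_one D (B h1) ⟨h1, hB h1⟩ 0⟩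
  have hη := ηp_nonneg n
  have hu := up_nonneg n
  have hε : 0 ≤ εp e n := by unfold εp; linarith
  -- LG bounds via uniform convergence
  have hLG : ∀ h : X → Fin k,
      LG D (B h) ⟨h, hB h⟩ n ≤ (B h).inf' ⟨h, hB h⟩ (errD D) + 2 * e n := by
    intro h
    have h1 := LG_le_inf_add D (B h) ⟨h, hB h⟩ (hBmeas h) n
    have h2 := hUC D hD h n
    rw [← hμ] at h1
    nlinarith
  -- LR bound in terms of LG
  have hLR : ∀ h : X → Fin k,
      LRc ηp D B hB n h ≤ LG D (B h) ⟨h, hB h⟩ n + ηp n := by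
    intro h
    unfold LRc
    have h1 : LG D (B h) ⟨h, hB h⟩ 0 = α D := hα D hD h
    have h2 := LG_nonneg D (B h) ⟨h, hB h⟩ n
    rw [h1]
    nlinarith [hα01.1, hα01.2]
  set C : ℝ := errD D h1 + ηp n + εp e n + 2 * e n with hC
  -- pointwise bound
  have hpt : ∀ S, LRc ηp D B hB n (update B hB (εp e n) h0 h1 S) ≤ C + (dev0 S + dev1 S) := by
    intro S
    unfold update
    split_ifs with hcase
    · -- output h0
      have hb1 : LRc ηp D B hB n h0 ≤ LG D (B h0) ⟨h0, hB h0⟩ n + ηp n := hLR h0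
      have hb2 := hLG h0
      -- inf' errD over B h0 ≤ errD h1 + εp + dev0 + dev1
      obtain ⟨f, hf, hfeq⟩ := Finset.exists_mem_eq_inf' ⟨h0, hB h0⟩ (errS S) (s := B h0)
      have hinf : (B h0).inf' ⟨h0, hB h0⟩ (errD D) ≤ errD D f := Finset.inf'_le _ hf
      have hf1 : errD D f ≤ errS S f + dev0 S := by
        have := Finset.le_sup' (fun f => |errS S f - errD D f|) hf
        have habs : errD D f - errS S f ≤ |errS S f - errD D f| := by
          rw [abs_sub_comm]; exact le_abs_self _
        rw [hdev0]; dsimp only; linarith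
      have hf2 : errS S f < (B h1).inf' ⟨h1, hB h1⟩ (errS S) + εp e n := hfeq ▸ hcase
      have hf3 : (B h1).inf' ⟨h1, hB h1⟩ (errS S) ≤ errS S h1 := Finset.inf'_le _ (hB h1)
      have hf4 : errS S h1 ≤ errD D h1 + dev1 S := by
        have := Finset.le_sup' (fun f => |errS S f - errD D f|) (hB h1)
        have habs : errS S h1 - errD D h1 ≤ |errS S h1 - errD D h1| := le_abs_self _
        rw [hdev1]; dsimp only; linarith
      have hd0 := hdev0_nonneg S
      have hd1 := hdev1_nonneg S
      rw [hC]
      linarith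
    · -- output h1
      have hb1 : LRc ηp D B hB n h1 ≤ LG D (B h1) ⟨h1, hB h1⟩ n + ηp n := hLR h1
      have hb2 := hLG h1
      have hinf : (B h1).inf' ⟨h1, hB h1⟩ (errD D) ≤ errD D h1 := Finset.inf'_le _ (hB h1)
      have hd0 := hdev0_nonneg S
      have hd1 := hdev1_nonneg S
      rw [hC]
      linarith
  have hfinal : ∫ S, LRc ηp D B hB n (update B hB (εp e n) h0 h1 S) ∂μ
      ≤ C + (∫ S, dev0 S ∂μ + ∫ S, dev1 S ∂μ) := by
    by_cases hint : Integrable (fun S => LRc ηp D B hB n (update B hB (εp e n) h0 h1 S)) μ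
    · have hadd : Integrable (fun S => dev0 S + dev1 S) μ :=
        (hdev_int h0).add (hdev_int h1)
      have hd0i : Integrable (fun S => dev0 S) μ := hdev_int h0
      have hd1i : Integrable (fun S => dev1 S) μ := hdev_int h1
      have hint2 : Integrable (fun S => C + (dev0 S + dev1 S)) μ :=
        (integrable_const _).add hadd
      calc ∫ S, LRc ηp D B hB n (update B hB (εp e n) h0 h1 S) ∂μ
          ≤ ∫ S, (C + (dev0 S + dev1 S)) ∂μ := integral_mono hint hint2 hpt
        _ = C + (∫ S, dev0 S ∂μ + ∫ S, dev1 S ∂μ) := by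
            rw [integral_add (integrable_const _) hadd,
              integral_const, probReal_univ, smul_eq_mul, one_mul,
              integral_add hd0i hd1i]
    · rw [integral_undef hint]
      have h1 := errD_nonneg D h1
      have h2 : 0 ≤ ∫ S, dev0 S ∂μ := integral_nonneg hdev0_nonneg
      have h3 : 0 ≤ ∫ S, dev1 S ∂μ := integral_nonneg hdev1_nonneg
      rw [hC]
      linarith
  have hεeq : εp e n = up n + 2 * e n := rfl
  calc ∫ S, LRc ηp D B hB n (update B hB (εp e n) h0 h1 S) ∂μ
      ≤ C + (∫ S, dev0 S ∂μ + ∫ S, dev1 S ∂μ) := hfinal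
    _ ≤ C + (e n + e n) := by linarith
    _ ≤ errD D h1 + (2 * ηp n + 3 * εp e n) := by rw [hC, hεeq]; linarith


end
end

section
/- In binary classification with B_h = {h, 1−h}: for every distribution D on X × {0,1}, every hypothesis h, and all n, m with m ≥ n, LG_m(h) ≤ LG_n(h); i.e., the expected population loss of the randomized ERM over {h, 1−h} is non-increasing in the sample size. -/
open MeasureTheory Finset Filter

noncomputable section

set_option linter.unusedSectionVars false

variable {X : Type*} [MeasurableSpace X] {k : ℕ}

open scoped Classical in
/-- The binary base class `B_h = {h, 1 - h}` consisting of `h` and its pointwise negation. -/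
def Bbin (h : X → Fin 2) : Finset (X → Fin 2) := {h, fun x => 1 - h x}

theorem Bbin_nonempty (h : X → Fin 2) : (Bbin h).Nonempty :=
  ⟨h, by simp [Bbin]⟩



lemma fin2_one_sub_ne_iff : ∀ a b : Fin 2, ((1 - a ≠ b) ↔ a = b) := by decide

lemma pmfExp_uniformOfFinset_s12 {H : Type*} (t : Finset H) (ht : t.Nonempty) (φ : H → ℝ) :
    pmfExp (PMF.uniformOfFinset t ht) φ = (∑ f ∈ t, φ f) / t.card := by
  unfold pmfExp
  rw [tsum_eq_sum (s := t) (fun f hf => by simp [PMF.uniformOfFinset_apply, hf])]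
  rw [Finset.sum_div]
  refine Finset.sum_congr rfl fun f hf => ?_
  rw [PMF.uniformOfFinset_apply, if_pos hf, ENNReal.toReal_inv, ENNReal.toReal_natCast]
  rw [inv_mul_eq_div]

def Wv (p : ℝ) (n kk : ℕ) : ℝ := if 2*kk < n then p else if n < 2*kk then 1-p else 1/2

lemma meas_errset {X : Type*} [MeasurableSpace X] (h : X → Fin 2) (hmeas : Measurable h) :
    MeasurableSet {z : X × Fin 2 | h z.1 ≠ z.2} := by
  have : {z : X × Fin 2 | h z.1 ≠ z.2}
      = (fun z : X × Fin 2 => (h z.1, z.2)) ⁻¹' {q : Fin 2 × Fin 2 | q.1 ≠ q.2} := rfl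
  rw [this]
  exact ((hmeas.comp measurable_fst).prodMk measurable_snd) ((Set.toFinite _).measurableSet)

lemma errD_one_sub (D : Measure (X × Fin 2)) [IsProbabilityMeasure D] (h : X → Fin 2)
    (hmeas : Measurable h) : errD D (fun x => 1 - h x) = 1 - errD D h := by
  have hcompl : {z : X × Fin 2 | (fun x => 1 - h x) z.1 ≠ z.2}
      = {z : X × Fin 2 | h z.1 ≠ z.2}ᶜ := by
    ext z
    simp [fin2_one_sub_ne_iff]
  unfold errD
  rw [hcompl, prob_compl_eq_one_sub (meas_errset h hmeas),
    ENNReal.toReal_sub_of_le prob_le_one ENNReal.one_ne_top, ENNReal.toReal_one]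

lemma ermSet_Bbin {n : ℕ} (h : X → Fin 2) (hne : h ≠ fun x => 1 - h x)
    (S : Fin n → X × Fin 2) :
    ermSet (Bbin h) S =
      if errS S h < errS S (fun x => 1 - h x) then {h}
      else if errS S (fun x => 1 - h x) < errS S h then {fun x => 1 - h x}
      else Bbin h := by
  classical
  have hmem : ∀ f, f ∈ Bbin h ↔ f = h ∨ f = fun x => 1 - h x := by
    intro f; simp [Bbin]
  have hh : h ∈ Bbin h := by simp [Bbin]
  have hh' : (fun x => 1 - h x) ∈ Bbin h := by simp [Bbin]
  ext f
  simp only [ermSet, Finset.mem_filter]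
  rcases lt_trichotomy (errS S h) (errS S (fun x => 1 - h x)) with hc | hc | hc
  · rw [if_pos hc]
    simp only [Finset.mem_singleton]
    constructor
    · rintro ⟨hf, hmin⟩
      rcases (hmem f).1 hf with rfl | rfl
      · rfl
      · exact absurd (hmin h hh) (not_le.2 hc)
    · rintro rfl
      refine ⟨hh, fun g hg => ?_⟩
      rcases (hmem g).1 hg with rfl | rfl
      · exact le_refl _
      · exact le_of_lt hc
  · rw [if_neg (by rw [hc]; exact lt_irrefl _), if_neg (by rw [hc]; exact lt_irrefl _)]
    constructor
    · rintro ⟨hf, _⟩; exact hf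
    · intro hf
      refine ⟨hf, fun g hg => ?_⟩
      rcases (hmem f).1 hf with rfl | rfl <;> rcases (hmem g).1 hg with rfl | rfl <;>
        simp [hc, le_refl]
  · rw [if_neg (not_lt.2 (le_of_lt hc)), if_pos hc]
    simp only [Finset.mem_singleton]
    constructor
    · rintro ⟨hf, hmin⟩
      rcases (hmem f).1 hf with rfl | rfl
      · exact absurd (hmin _ hh') (not_le.2 hc)
      · rfl
    · rintro rfl
      refine ⟨hh', fun g hg => ?_⟩
      rcases (hmem g).1 hg with rfl | rfl
      · exact le_of_lt hc
      · exact le_refl _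

lemma errS_one_sub {n : ℕ} (h : X → Fin 2) (S : Fin n → X × Fin 2) :
    errS S (fun x => 1 - h x)
      = (((n : ℝ) - (Finset.univ.filter fun i => h (S i).1 ≠ (S i).2).card)) / n := by
  classical
  unfold errS
  congr 1
  have hpred : (Finset.univ.filter fun i => (fun x => 1 - h x) (S i).1 ≠ (S i).2)
      = Finset.univ.filter fun i => ¬ (h (S i).1 ≠ (S i).2) := by
    apply Finset.filter_congr
    intro i _
    simp only [fin2_one_sub_ne_iff, ne_eq, not_not]
  rw [hpred]
  have := Finset.card_filter_add_card_filter_not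
    (s := (Finset.univ : Finset (Fin n))) (fun i => h (S i).1 ≠ (S i).2)
  rw [Finset.card_univ, Fintype.card_fin] at this
  have hcast : ((Finset.univ.filter fun i => ¬ (h (S i).1 ≠ (S i).2)).card : ℝ)
      = n - (Finset.univ.filter fun i => h (S i).1 ≠ (S i).2).card := by
    have : (Finset.univ.filter fun i => ¬ (h (S i).1 ≠ (S i).2)).card
        = n - (Finset.univ.filter fun i => h (S i).1 ≠ (S i).2).card := by omega
    rw [this]
    push_cast [Nat.cast_sub (by omega : (Finset.univ.filter fun i => h (S i).1 ≠ (S i).2).card ≤ n)]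
    ring
  exact hcast

lemma pmfExp_ermPMF {n : ℕ} (D : Measure (X × Fin 2)) [IsProbabilityMeasure D]
    (h : X → Fin 2) (hmeas : Measurable h) (hne : h ≠ fun x => 1 - h x)
    (S : Fin n → X × Fin 2) :
    pmfExp (ermPMF (Bbin h) (Bbin_nonempty h) S) (errD D)
      = Wv (errD D h) n ((Finset.univ.filter fun i => h (S i).1 ≠ (S i).2).card) := by
  classical
  set c := (Finset.univ.filter fun i => h (S i).1 ≠ (S i).2).card with hcdef
  have hcle : c ≤ n := by
    have := Finset.card_filter_le (Finset.univ : Finset (Fin n))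
      (fun i => h (S i).1 ≠ (S i).2)
    simpa [Finset.card_univ] using this
  rw [ermPMF, pmfExp_uniformOfFinset_s12, ermSet_Bbin h hne S]
  have hS1 : errS S h = (c : ℝ) / n := rfl
  have hS2 : errS S (fun x => 1 - h x) = ((n : ℝ) - c) / n := errS_one_sub h S
  have hsum : (∑ f ∈ Bbin h, errD D f) = errD D h + errD D (fun x => 1 - h x) := by
    rw [Bbin, Finset.sum_pair hne]
  have hcard : (Bbin h).card = 2 := by
    rw [Bbin, Finset.card_pair hne]
  rcases Nat.eq_zero_or_pos n with rfl | hn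
  · have hc0 : c = 0 := by omega
    rw [if_neg (by rw [hS1, hS2, hc0]; norm_num), if_neg (by rw [hS1, hS2, hc0]; norm_num)]
    rw [hsum, hcard, errD_one_sub D h hmeas, Wv, hc0]
    norm_num
  · have hnpos : (0:ℝ) < n := by exact_mod_cast hn
    rcases Nat.lt_trichotomy (2*c) n with hcc | hcc | hcc
    · have : errS S h < errS S (fun x => 1 - h x) := by
        rw [hS1, hS2]
        apply div_lt_div_of_pos_right ?_ hnpos
        · have hr : 2*(c:ℝ) < n := by exact_mod_cast hcc
          linarith
      rw [if_pos this, Finset.sum_singleton, Finset.card_singleton, Wv, if_pos hcc]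
      norm_num
    · have he : errS S h = errS S (fun x => 1 - h x) := by
        rw [hS1, hS2]
        congr 1
        have hr : 2*(c:ℝ) = n := by exact_mod_cast hcc
        linarith
      rw [if_neg (by rw [he]; exact lt_irrefl _), if_neg (by rw [he]; exact lt_irrefl _)]
      rw [hsum, hcard, errD_one_sub D h hmeas, Wv, if_neg (by omega), if_neg (by omega)]
      norm_num
    · have : errS S (fun x => 1 - h x) < errS S h := by
        rw [hS1, hS2]
        apply div_lt_div_of_pos_right ?_ hnpos
        · have hr : (n:ℝ) < 2*c := by exact_mod_cast hcc
          linarith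
      rw [if_neg (not_lt.2 (le_of_lt this)), if_pos this, Finset.sum_singleton,
        Finset.card_singleton, Wv, if_neg (by omega), if_pos hcc]
      rw [errD_one_sub D h hmeas]
      norm_num

lemma card_count (n kk : ℕ) :
    (Finset.univ.filter fun b : Fin n → Bool =>
      (Finset.univ.filter fun i => b i = true).card = kk).card = n.choose kk := by
  classical
  have := Finset.card_nbij' (s := Finset.univ.filter fun b : Fin n → Bool =>
      (Finset.univ.filter fun i => b i = true).card = kk)
    (t := Finset.powersetCard kk (Finset.univ : Finset (Fin n)))
    (fun b => Finset.univ.filter fun i => b i = true)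
    (fun s i => decide (i ∈ s))
    (by
      intro b hb
      simp only [Finset.mem_coe, Finset.mem_filter, Finset.mem_univ, true_and] at hb
      rw [Finset.mem_coe, Finset.mem_powersetCard]
      exact ⟨Finset.subset_univ _, hb⟩)
    (by
      intro s hs
      rw [Finset.mem_coe, Finset.mem_powersetCard] at hs
      simp only [Finset.mem_coe, Finset.mem_filter, Finset.mem_univ, true_and]
      rw [← hs.2]
      congr 1
      ext i
      simp)
    (by
      intro b _
      funext i
      simp)
    (by
      intro s _
      ext i
      simp)
  rw [this, Finset.card_powersetCard, Finset.card_univ, Fintype.card_fin]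

lemma integral_count (D : Measure (X × Fin 2)) [IsProbabilityMeasure D]
    (h : X → Fin 2) (hmeas : Measurable h) (n : ℕ) (F : ℕ → ℝ) :
    ∫ S, F ((Finset.univ.filter fun i => h (S i).1 ≠ (S i).2).card)
        ∂(Measure.pi fun _ : Fin n => D)
      = ∑ kk ∈ Finset.range (n+1), (n.choose kk : ℝ) *
          ((D {z : X × Fin 2 | h z.1 ≠ z.2}) ^ kk *
            (1 - D {z : X × Fin 2 | h z.1 ≠ z.2}) ^ (n - kk)).toReal * F kk := by
  classical
  set P := D {z : X × Fin 2 | h z.1 ≠ z.2} with hP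
  set T : X × Fin 2 → Bool := fun z => decide (h z.1 ≠ z.2) with hT
  have hTmeas : Measurable T := by
    have : T = fun z => decide (h z.1 ≠ z.2) := rfl
    apply measurable_to_countable'
    intro y
    rcases y with _ | _
    · have : T ⁻¹' {false} = {z : X × Fin 2 | h z.1 ≠ z.2}ᶜ := by
        ext z; simp [hT]
      rw [show (T ⁻¹' {false}) = {z : X × Fin 2 | h z.1 ≠ z.2}ᶜ from this]
      exact (meas_errset h hmeas).compl
    · have : T ⁻¹' {true} = {z : X × Fin 2 | h z.1 ≠ z.2} := by
        ext z; simp [hT]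
      rw [this]
      exact meas_errset h hmeas
  set Φ : (Fin n → X × Fin 2) → (Fin n → Bool) := fun S i => T (S i) with hΦ
  have hΦmeas : Measurable Φ :=
    measurable_pi_lambda _ fun i => hTmeas.comp (measurable_pi_apply i)
  set c : (Fin n → Bool) → ℕ := fun b => (Finset.univ.filter fun i => b i = true).card with hc
  have key : ∀ S : Fin n → X × Fin 2,
      (Finset.univ.filter fun i => h (S i).1 ≠ (S i).2).card = c (Φ S) := by
    intro S
    simp [hc, hΦ, hT]
  have hsm : AEStronglyMeasurable (fun b : Fin n → Bool => F (c b))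
      (Measure.map Φ (Measure.pi fun _ : Fin n => D)) :=
    (measurable_of_countable _).aestronglyMeasurable
  have hprob : IsProbabilityMeasure (Measure.map Φ (Measure.pi fun _ : Fin n => D)) :=
    Measure.isProbabilityMeasure_map hΦmeas.aemeasurable
  have hsing : ∀ b : Fin n → Bool,
      (Measure.map Φ (Measure.pi fun _ : Fin n => D)) {b} = P ^ (c b) * (1-P) ^ (n - c b) := by
    intro b
    rw [Measure.map_apply hΦmeas (measurableSet_singleton b)]
    have hpre : Φ ⁻¹' {b} = Set.pi Set.univ (fun i => T ⁻¹' {b i}) := by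
      ext S
      simp [hΦ, funext_iff, Set.mem_pi]
    rw [hpre, Measure.pi_pi]
    have hDT : ∀ v : Bool, D (T ⁻¹' {v}) = if v = true then P else 1 - P := by
      intro v
      rcases v with _ | _
      · have : T ⁻¹' {false} = {z : X × Fin 2 | h z.1 ≠ z.2}ᶜ := by
          ext z; simp [hT]
        rw [this, prob_compl_eq_one_sub (meas_errset h hmeas)]
        simp [hP]
      · have : T ⁻¹' {true} = {z : X × Fin 2 | h z.1 ≠ z.2} := by
          ext z; simp [hT]
        rw [this]
        simp [hP]
    calc ∏ i : Fin n, D (T ⁻¹' {b i}) = ∏ i : Fin n, (if b i = true then P else 1 - P) := by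
          exact Finset.prod_congr rfl fun i _ => hDT (b i)
      _ = P ^ (c b) * (1-P) ^ (n - c b) := by
          rw [Finset.prod_ite (fun _ => P) (fun _ => 1 - P)]
          rw [Finset.prod_const, Finset.prod_const]
          congr 1
          have := Finset.card_filter_add_card_filter_not
            (s := (Finset.univ : Finset (Fin n))) (fun i => b i = true)
          rw [Finset.card_univ, Fintype.card_fin] at this
          have hcle : c b ≤ n := by
            have := Finset.card_filter_le (Finset.univ : Finset (Fin n)) (fun i => b i = true)
            simpa [Finset.card_univ, hc] using this
          have hceq : c b = (Finset.univ.filter fun i => b i = true).card := rfl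
          congr 1
          omega
  calc ∫ S, F ((Finset.univ.filter fun i => h (S i).1 ≠ (S i).2).card)
        ∂(Measure.pi fun _ : Fin n => D)
      = ∫ S, F (c (Φ S)) ∂(Measure.pi fun _ : Fin n => D) := by
        simp only [key]
    _ = ∫ b, F (c b) ∂(Measure.map Φ (Measure.pi fun _ : Fin n => D)) :=
        (MeasureTheory.integral_map hΦmeas.aemeasurable hsm).symm
    _ = ∑ b : Fin n → Bool,
          ((Measure.map Φ (Measure.pi fun _ : Fin n => D)) {b}).toReal • F (c b) :=
        MeasureTheory.integral_fintype (Integrable.of_finite)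
    _ = ∑ b : Fin n → Bool, (P ^ (c b) * (1-P) ^ (n - c b)).toReal * F (c b) := by
        refine Finset.sum_congr rfl fun b _ => ?_
        rw [hsing b, smul_eq_mul]
    _ = ∑ kk ∈ Finset.range (n+1), ∑ b ∈ Finset.univ.filter (fun b : Fin n → Bool => c b = kk),
          (P ^ (c b) * (1-P) ^ (n - c b)).toReal * F (c b) := by
        refine (Finset.sum_fiberwise_of_maps_to ?_ _).symm
        intro b _
        rw [Finset.mem_range]
        have := Finset.card_filter_le (Finset.univ : Finset (Fin n)) (fun i => b i = true)
        simp only [Finset.card_univ, Fintype.card_fin] at this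
        have hceq : c b = (Finset.univ.filter fun i => b i = true).card := rfl
        omega
    _ = ∑ kk ∈ Finset.range (n+1), (n.choose kk : ℝ) *
          ((P ^ kk * (1-P) ^ (n - kk)).toReal) * F kk := by
        refine Finset.sum_congr rfl fun kk _ => ?_
        have : ∀ b ∈ Finset.univ.filter (fun b : Fin n → Bool => c b = kk),
            (P ^ (c b) * (1-P) ^ (n - c b)).toReal * F (c b)
              = (P ^ kk * (1-P) ^ (n - kk)).toReal * F kk := by
          intro b hb
          rw [(Finset.mem_filter.1 hb).2]
        rw [Finset.sum_congr rfl this, Finset.sum_const, card_count, nsmul_eq_mul, mul_assoc]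

def Gs (p : ℝ) (n : ℕ) : ℝ :=
  ∑ kk ∈ Finset.range (n+1), (n.choose kk : ℝ) * (p^kk * (1-p)^(n-kk)) * Wv p n kk

lemma binom_step (p : ℝ) (n : ℕ) (f : ℕ → ℝ) :
    ∑ kk ∈ Finset.range (n+1+1), ((n+1).choose kk : ℝ) * (p^kk * (1-p)^(n+1-kk)) * f kk
      = ∑ kk ∈ Finset.range (n+1), (n.choose kk : ℝ) * (p^kk * (1-p)^(n-kk)) *
          ((1-p) * f kk + p * f (kk+1)) := by
  set q : ℝ := 1 - p with hqdef
  rw [Finset.sum_range_succ' (fun kk => ((n+1).choose kk : ℝ) * (p^kk * q^(n+1-kk)) * f kk) (n+1)]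
  have h1 : ∀ kk ∈ Finset.range (n+1),
      ((n+1).choose (kk+1) : ℝ) * (p^(kk+1) * q^(n+1-(kk+1))) * f (kk+1)
        = (n.choose kk : ℝ) * (p^(kk+1) * q^(n-kk)) * f (kk+1)
          + (n.choose (kk+1) : ℝ) * (p^(kk+1) * q^(n-kk)) * f (kk+1) := by
    intro kk _
    have he : n+1-(kk+1) = n - kk := by omega
    rw [he, Nat.choose_succ_succ]
    push_cast
    ring
  rw [Finset.sum_congr rfl h1, Finset.sum_add_distrib]
  have h2 : ∀ kk ∈ Finset.range (n+1),
      (n.choose kk : ℝ) * (p^kk * q^(n-kk)) * (q * f kk + p * f (kk+1))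
        = (n.choose kk : ℝ) * (p^kk * q^(n-kk)) * (q * f kk)
          + (n.choose kk : ℝ) * (p^(kk+1) * q^(n-kk)) * f (kk+1) := by
    intro kk _; ring
  rw [Finset.sum_congr rfl h2, Finset.sum_add_distrib]
  have h3 : ∑ kk ∈ Finset.range (n+1), (n.choose (kk+1) : ℝ) * (p^(kk+1) * q^(n-kk)) * f (kk+1)
        + ((n+1).choose 0 : ℝ) * (p^0 * q^(n+1-0)) * f 0
      = ∑ kk ∈ Finset.range (n+1), (n.choose kk : ℝ) * (p^kk * q^(n-kk)) * (q * f kk) := by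
    rw [Finset.sum_range_succ' (fun kk => (n.choose kk : ℝ) * (p^kk * q^(n-kk)) * (q * f kk)) n]
    rw [Finset.sum_range_succ (fun kk => (n.choose (kk+1) : ℝ) * (p^(kk+1) * q^(n-kk)) * f (kk+1)) n]
    have hz : ((n.choose (n+1) : ℕ) : ℝ) = 0 := by
      rw [Nat.choose_eq_zero_of_lt (by omega)]; simp
    rw [hz]
    have h4 : ∀ kk ∈ Finset.range n,
        (n.choose (kk+1) : ℝ) * (p^(kk+1) * q^(n-kk)) * f (kk+1)
          = (n.choose (kk+1) : ℝ) * (p^(kk+1) * q^(n-(kk+1))) * (q * f (kk+1)) := by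
      intro kk hkk
      rw [Finset.mem_range] at hkk
      have he : n - kk = (n - (kk+1)) + 1 := by omega
      rw [he, pow_succ]
      ring
    rw [Finset.sum_congr rfl h4]
    simp only [Nat.choose_zero_right, Nat.cast_one, Nat.sub_zero, pow_zero]
    ring
  linarith [h3]

lemma Gs_succ_le (p : ℝ) (hp0 : 0 ≤ p) (hp1 : p ≤ 1) (n : ℕ) : Gs p (n+1) ≤ Gs p n := by
  have hq0 : (0:ℝ) ≤ 1 - p := by linarith
  have hstep : Gs p (n+1) = ∑ kk ∈ Finset.range (n+1),
      (n.choose kk : ℝ) * (p^kk * (1-p)^(n-kk)) *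
        ((1-p) * Wv p (n+1) kk + p * Wv p (n+1) (kk+1)) := binom_step p n (Wv p (n+1))
  rw [hstep, Gs, ← sub_nonneg, ← Finset.sum_sub_distrib]
  rcases Nat.even_or_odd n with he | ho
  · apply Finset.sum_nonneg
    intro kk hkk
    rw [Finset.mem_range] at hkk
    obtain ⟨t, rfl⟩ := he
    have hB0 : (0:ℝ) ≤ ((t+t).choose kk : ℝ) * (p^kk * (1-p)^(t+t-kk)) := by positivity
    rcases Nat.lt_trichotomy (2*kk) (t+t) with hlt | heq | hgt
    · rw [Wv, if_pos hlt, Wv, if_pos (by omega), Wv, if_pos (by omega : 2*(kk+1) < t+t+1)]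
      nlinarith
    · rw [Wv, if_neg (by omega), if_neg (by omega), Wv, if_pos (by omega),
        Wv, if_neg (by omega), if_pos (by omega : t+t+1 < 2*(kk+1))]
      nlinarith [sq_nonneg (p - 1/2)]
    · rw [Wv, if_neg (by omega), if_pos hgt, Wv, if_neg (by omega), if_pos (by omega),
        Wv, if_neg (by omega), if_pos (by omega : t+t+1 < 2*(kk+1))]
      nlinarith
  · obtain ⟨t, rfl⟩ := ho
    have hsub : ({t, t+1} : Finset ℕ) ⊆ Finset.range (2*t+1+1) := by
      intro x hx
      simp only [Finset.mem_insert, Finset.mem_singleton] at hx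
      rcases hx with rfl | rfl <;> (rw [Finset.mem_range]; omega)
    have hzero : ∀ kk ∈ Finset.range (2*t+1+1), kk ∉ ({t, t+1} : Finset ℕ) →
        ((2*t+1).choose kk : ℝ) * (p^kk * (1-p)^(2*t+1-kk)) * Wv p (2*t+1) kk
          - ((2*t+1).choose kk : ℝ) * (p^kk * (1-p)^(2*t+1-kk)) *
              ((1-p) * Wv p (2*t+1+1) kk + p * Wv p (2*t+1+1) (kk+1)) = 0 := by
      intro kk hkk hkk'
      rw [Finset.mem_range] at hkk
      simp only [Finset.mem_insert, Finset.mem_singleton] at hkk'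
      push_neg at hkk'
      rcases Nat.lt_or_ge (2*kk) (2*t+1) with hlt | hge
      · have hlt2 : 2*kk < 2*t := by omega
        rw [Wv, if_pos (by omega), Wv, if_pos (by omega),
          Wv, if_pos (by omega : 2*(kk+1) < 2*t+1+1)]
        ring
      · have hgt2 : 2*t+1 < 2*kk := by omega
        rw [Wv, if_neg (by omega), if_pos (by omega), Wv, if_neg (by omega), if_pos (by omega),
          Wv, if_neg (by omega), if_pos (by omega : 2*t+1+1 < 2*(kk+1))]
        ring
    rw [← Finset.sum_subset hsub hzero, Finset.sum_pair (by omega : t ≠ t+1)]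
    have he1 : 2*t+1 - t = t+1 := by omega
    have he2 : 2*t+1 - (t+1) = t := by omega
    have hch : (2*t+1).choose (t+1) = (2*t+1).choose t := by
      rw [← Nat.choose_symm (show t+1 ≤ 2*t+1 by omega), he2]
    rw [Wv, if_pos (by omega : 2*t < 2*t+1), Wv, if_pos (by omega),
      Wv, if_neg (by omega : ¬ 2*(t+1) < 2*t+1+1), if_neg (by omega : ¬ 2*t+1+1 < 2*(t+1)),
      Wv, if_neg (by omega : ¬ 2*(t+1) < 2*t+1), if_pos (by omega : 2*t+1 < 2*(t+1)),
      Wv, if_neg (by omega : ¬ 2*(t+1+1) < 2*t+1+1), if_pos (by omega : 2*t+1+1 < 2*(t+1+1)),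
      he1, he2, hch]
    have : ((2*t+1).choose t : ℝ) * (p^t * (1-p)^(t+1)) * (p - ((1-p)*p + p*(1/2)))
        + ((2*t+1).choose t : ℝ) * (p^(t+1) * (1-p)^t) * ((1-p) - ((1-p)*(1/2) + p*(1-p))) = 0 := by
      have hps : p^(t+1) = p^t * p := pow_succ p t
      have hqs : (1-p)^(t+1) = (1-p)^t * (1-p) := pow_succ (1-p) t
      rw [hps, hqs]
      ring
    linarith [this]

lemma LG_eq (D : Measure (X × Fin 2)) [IsProbabilityMeasure D] (h : X → Fin 2)
    (hmeas : Measurable h) (hne : h ≠ fun x => 1 - h x) (n : ℕ) :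
    LG D (Bbin h) (Bbin_nonempty h) n = Gs (errD D h) n := by
  have hint : (fun S : Fin n → X × Fin 2 =>
        pmfExp (ermPMF (Bbin h) (Bbin_nonempty h) S) (errD D))
      = fun S => Wv (errD D h) n ((Finset.univ.filter fun i => h (S i).1 ≠ (S i).2).card) :=
    funext (pmfExp_ermPMF D h hmeas hne)
  rw [LG, hint, integral_count D h hmeas n (Wv (errD D h) n), Gs]
  refine Finset.sum_congr rfl fun kk _ => ?_
  congr 1
  congr 1
  rw [ENNReal.toReal_mul, ENNReal.toReal_pow, ENNReal.toReal_pow,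
    ENNReal.toReal_sub_of_le prob_le_one ENNReal.one_ne_top, ENNReal.toReal_one]
  rfl


/-- **The randomized ERM over `{h, 1 - h}` is monotone** (Lemma 3.2).  In binary
classification, for every distribution `D` on `X × {0,1}`, every (measurable) hypothesis
`h` and all `n ≤ m`: `LG_m(h) ≤ LG_n(h)`. -/
theorem binary_randomized_ERM_monotone
    (D : Measure (X × Fin 2)) [IsProbabilityMeasure D]
    (h : X → Fin 2) (hmeas : Measurable h)
    (n m : ℕ) (hnm : n ≤ m) :
    LG D (Bbin h) (Bbin_nonempty h) m ≤ LG D (Bbin h) (Bbin_nonempty h) n := by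
  have hXne : Nonempty X := by
    by_contra hc
    rw [not_nonempty_iff] at hc
    have h1 : D Set.univ = 1 := measure_univ
    have hu : (Set.univ : Set (X × Fin 2)) = ∅ := by
      simp [Set.univ_eq_empty_iff]
      exact hc
    rw [hu, measure_empty] at h1
    exact one_ne_zero h1.symm
  obtain ⟨x⟩ := hXne
  have hne : h ≠ fun x => 1 - h x := by
    intro heq
    have hx := congrFun heq x
    have hall : ∀ a : Fin 2, a ≠ 1 - a := by decide
    exact hall (h x) hx
  have hp0 : 0 ≤ errD D h := ENNReal.toReal_nonneg
  have hp1 : errD D h ≤ 1 := by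
    have := ENNReal.toReal_mono ENNReal.one_ne_top
      (prob_le_one (μ := D) (s := {p : X × Fin 2 | h p.1 ≠ p.2}))
    rwa [ENNReal.toReal_one] at this
  have key : ∀ m', n ≤ m' → Gs (errD D h) m' ≤ Gs (errD D h) n := by
    intro m' hm'
    induction m', hm' using Nat.le_induction with
    | base => exact le_refl _
    | succ m' hm' ih => exact (Gs_succ_le _ hp0 hp1 m').trans ih
  rw [LG_eq D h hmeas hne m, LG_eq D h hmeas hne n]
  exact key m hnm


end
end

section
/- Let p = (p_1,…,p_k) be a probability vector and set q_j = 1 − p_j. Let X_1, X_2, … be i.i.d. random variables with values in {1,…,k} and Pr[X_i = j] = p_j. For a finite tuple L = (X_1,…,X_n), let I(L) = {j : Σ_{i=1}^n 1[X_i = j] is maximal} and f(L) = (1/|I(L)|)·Σ_{j∈I(L)} q_j. Then for every n ≥ 0: E[f(X_1,…,X_{n+1})] ≤ E[f(X_1,…,X_n)]. -/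
/-!
STATEMENT 15: Key combinatorial step of Lemma 4.2.  Let `p` be a probability vector on
`{1,…,k}`, `q_j = 1 − p_j`, and let `X_1, X_2, …` be i.i.d. with `Pr[X_i = j] = p_j`.
With `I(L)` the set of modes (most frequent values) of the tuple `L` and
`f(L) = (1/|I(L)|) Σ_{j ∈ I(L)} q_j`, the expectation `E[f(X_1,…,X_n)]` is non-increasing
in `n`.  (Expectations over the i.i.d. sample are written as finite sums over all tuples,
weighted by their probabilities `Π_i p (L i)`.)
-/

open Finset

noncomputable section

/-- The number of occurrences of the value `j` in the tuple `L`. -/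
def modeCount {k n : ℕ} (L : Fin n → Fin k) (j : Fin k) : ℕ :=
  (Finset.univ.filter fun i => L i = j).card

/-- `I(L)`: the set of values with the largest number of occurrences in `L`.
(For the empty tuple this is all of `Fin k`.) -/
def modeSet {k n : ℕ} (L : Fin n → Fin k) : Finset (Fin k) :=
  Finset.univ.filter fun j => ∀ j', modeCount L j' ≤ modeCount L j

/-- `f(L) = (1/|I(L)|) Σ_{j ∈ I(L)} q j`: the expected weight of a uniformly random mode
of the tuple `L`. -/
def modeErr {k : ℕ} (q : Fin k → ℝ) {n : ℕ} (L : Fin n → Fin k) : ℝ :=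
  (∑ j ∈ modeSet L, q j) / (modeSet L).card

variable {k n : ℕ}

lemma mem_modeSet {L : Fin n → Fin k} {j : Fin k} :
    j ∈ modeSet L ↔ ∀ j', modeCount L j' ≤ modeCount L j := by
  simp [modeSet]

lemma modeSet_nonempty (hk : 0 < k) (L : Fin n → Fin k) : (modeSet L).Nonempty := by
  have : Nonempty (Fin k) := ⟨⟨0, hk⟩⟩
  obtain ⟨j, -, hj⟩ := Finset.exists_max_image (univ : Finset (Fin k)) (modeCount L)
    univ_nonempty
  exact ⟨j, mem_modeSet.2 fun j' => hj j' (mem_univ _)⟩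

lemma modeCount_cons (i : Fin k) (L : Fin n → Fin k) (j : Fin k) :
    modeCount (Fin.cons i L) j = (if i = j then 1 else 0) + modeCount L j := by
  unfold modeCount
  rw [Finset.card_filter, Finset.card_filter, Fin.sum_univ_succ]
  simp [Fin.cons_zero, Fin.cons_succ]

/-- Case A: adding a mode makes it the unique mode. -/
lemma modeSet_cons_of_mem {i : Fin k} {L : Fin n → Fin k} (hi : i ∈ modeSet L) :
    modeSet (Fin.cons i L) = {i} := by
  have hmax := mem_modeSet.1 hi
  ext t
  simp only [mem_modeSet, mem_singleton]
  constructor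
  · intro ht
    by_contra hne
    have := ht i
    rw [modeCount_cons, modeCount_cons, if_pos rfl, if_neg (fun h => hne h.symm)] at this
    have h2 := hmax t
    omega
  · rintro rfl t'
    rw [modeCount_cons, modeCount_cons, if_pos rfl]
    have := hmax t'
    split <;> omega

/-- The set of "near-modes": values one short of the maximal count. -/
def nearSet (L : Fin n → Fin k) : Finset (Fin k) :=
  Finset.univ.filter fun i => i ∉ modeSet L ∧ ∀ j', modeCount L j' ≤ modeCount L i + 1

lemma mem_nearSet {L : Fin n → Fin k} {i : Fin k} :
    i ∈ nearSet L ↔ i ∉ modeSet L ∧ ∀ j', modeCount L j' ≤ modeCount L i + 1 := by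
  simp [nearSet]

lemma nearSet_count {L : Fin n → Fin k} {i j : Fin k} (hi : i ∈ nearSet L)
    (hj : j ∈ modeSet L) : modeCount L j = modeCount L i + 1 := by
  obtain ⟨hni, hub⟩ := mem_nearSet.1 hi
  have h1 : ¬ ∀ j', modeCount L j' ≤ modeCount L i := fun h => hni (mem_modeSet.2 h)
  push_neg at h1
  obtain ⟨u, hu⟩ := h1
  have := mem_modeSet.1 hj u
  have := hub j
  omega

lemma nearSet_ne {L : Fin n → Fin k} {i j : Fin k} (hi : i ∈ nearSet L)
    (hj : j ∈ modeSet L) : i ≠ j := by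
  intro h; exact (mem_nearSet.1 hi).1 (h ▸ hj)

/-- Case B: adding a near-mode enlarges the mode set by the new element. -/
lemma modeSet_cons_of_near {i : Fin k} {L : Fin n → Fin k} (hi : i ∈ nearSet L) :
    modeSet (Fin.cons i L) = insert i (modeSet L) := by
  obtain ⟨hni, hub⟩ := mem_nearSet.1 hi
  ext t
  simp only [mem_modeSet, mem_insert]
  constructor
  · intro ht
    by_cases hti : t = i
    · exact Or.inl hti
    · refine Or.inr fun j' => ?_
      have h1 := ht j'
      have h2 := ht i
      rw [modeCount_cons, modeCount_cons] at h1 h2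
      rw [if_pos rfl, if_neg (fun h : i = t => hti h.symm)] at h2
      rw [if_neg (fun h : i = t => hti h.symm)] at h1
      have h3 := hub t
      by_cases hij : i = j'
      · subst hij; omega
      · rw [if_neg hij] at h1; omega
  · rintro (rfl | ht) <;> intro j' <;> rw [modeCount_cons, modeCount_cons]
    · have := hub j'
      rw [if_pos rfl]
      by_cases h : t = j'
      · subst h; simp only [eq_self_iff_true, if_true]; omega
      · rw [if_neg h]; omega
    · have hcnt : modeCount L t = modeCount L i + 1 := nearSet_count hi (mem_modeSet.2 ht)
      have h1 := ht j'
      have hti : i ≠ t := nearSet_ne hi (mem_modeSet.2 ht)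
      rw [if_neg hti]
      by_cases h : i = j'
      · subst h; simp only [eq_self_iff_true, if_true]; omega
      · rw [if_neg h]; omega

/-- Case C: adding an element that is far from being a mode does not change the mode set. -/
lemma modeSet_cons_of_far {i : Fin k} {L : Fin n → Fin k} (h1 : i ∉ modeSet L)
    (h2 : i ∉ nearSet L) : modeSet (Fin.cons i L) = modeSet L := by
  have h3 : ¬ ∀ j', modeCount L j' ≤ modeCount L i + 1 := by
    intro h; exact h2 (mem_nearSet.2 ⟨h1, h⟩)
  push_neg at h3
  obtain ⟨u, hu⟩ := h3
  have hui : u ≠ i := by rintro rfl; omega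
  ext t
  simp only [mem_modeSet]
  constructor
  · intro ht
    have hti : t ≠ i := by
      intro h
      have h5 := ht u
      rw [h, modeCount_cons, modeCount_cons, if_pos rfl,
        if_neg (fun hh : i = u => hui hh.symm)] at h5
      omega
    intro j'
    have h6 := ht j'
    rw [modeCount_cons, modeCount_cons, if_neg (fun h : i = t => hti h.symm)] at h6
    split at h6 <;> omega
  · intro ht
    have hti : t ≠ i := by
      rintro rfl
      have := ht u
      omega
    intro j'
    rw [modeCount_cons, modeCount_cons, if_neg (fun h : i = t => hti h.symm)]
    have h4 := ht j'
    have h5 := ht u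
    by_cases h : i = j'
    · subst h; simp only [eq_self_iff_true, if_true]; omega
    · rw [if_neg h]; omega

lemma modeErr_cons_of_mem (q : Fin k → ℝ) {i : Fin k} {L : Fin n → Fin k}
    (hi : i ∈ modeSet L) : modeErr q (Fin.cons i L) = q i := by
  rw [modeErr, modeSet_cons_of_mem hi]
  simp

lemma modeErr_cons_of_near (q : Fin k → ℝ) {i : Fin k} {L : Fin n → Fin k}
    (hi : i ∈ nearSet L) :
    modeErr q (Fin.cons i L)
      = (q i + ∑ j ∈ modeSet L, q j) / ((modeSet L).card + 1) := by
  have hni : i ∉ modeSet L := (mem_nearSet.1 hi).1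
  rw [modeErr, modeSet_cons_of_near hi, Finset.sum_insert hni, Finset.card_insert_of_notMem hni]
  push_cast
  ring_nf

lemma modeErr_cons_of_far (q : Fin k → ℝ) {i : Fin k} {L : Fin n → Fin k}
    (h1 : i ∉ modeSet L) (h2 : i ∉ nearSet L) :
    modeErr q (Fin.cons i L) = modeErr q L := by
  rw [modeErr, modeSet_cons_of_far h1 h2, modeErr]

/-- Express the product of `g` over the values of a tuple via the counts. -/
lemma prod_tuple_eq (g : Fin k → ℝ) (L : Fin n → Fin k) :
    ∏ t, g (L t) = ∏ v, g v ^ modeCount L v := by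
  rw [← Finset.prod_fiberwise univ L (fun t => g (L t))]
  refine Finset.prod_congr rfl fun v _ => ?_
  rw [modeCount, Finset.prod_congr rfl (fun t ht => ?_), Finset.prod_const]
  exact congrArg g (Finset.mem_filter.1 ht).2

lemma modeCount_swap_comp (L : Fin n → Fin k) (i j v : Fin k) :
    modeCount (Equiv.swap i j ∘ L) v = modeCount L (Equiv.swap i j v) := by
  unfold modeCount
  congr 1
  apply Finset.filter_congr
  intro t _
  simp only [Function.comp]
  constructor
  · intro h; rw [← h, Equiv.swap_apply_self]
  · intro h; rw [h, Equiv.swap_apply_self]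

lemma mem_modeSet_swap {L : Fin n → Fin k} {i j v : Fin k} :
    v ∈ modeSet (Equiv.swap i j ∘ L) ↔ Equiv.swap i j v ∈ modeSet L := by
  simp only [mem_modeSet, modeCount_swap_comp]
  constructor
  · intro h j'
    have := h (Equiv.swap i j j')
    rwa [Equiv.swap_apply_self] at this
  · intro h j'
    exact h _

lemma modeSet_swap (L : Fin n → Fin k) (i j : Fin k) :
    modeSet (Equiv.swap i j ∘ L) = (modeSet L).image (Equiv.swap i j) := by
  ext v
  rw [mem_modeSet_swap]
  constructor
  · intro h
    exact Finset.mem_image.2 ⟨Equiv.swap i j v, h, Equiv.swap_apply_self _ _ _⟩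
  · intro h
    obtain ⟨w, hw, rfl⟩ := Finset.mem_image.1 h
    rwa [Equiv.swap_apply_self]

lemma card_modeSet_swap (L : Fin n → Fin k) (i j : Fin k) :
    (modeSet (Equiv.swap i j ∘ L)).card = (modeSet L).card := by
  rw [modeSet_swap, Finset.card_image_of_injective _ (Equiv.injective _)]

/-- The key probability identity: swapping the roles of a mode `j` and a near-mode `i`
in the tuple and exchanging the extra sample preserves the probability weight. -/
lemma prod_swap_key (p : Fin k → ℝ) {L : Fin n → Fin k} {i j : Fin k} (hij : i ≠ j)
    (hc : modeCount L j = modeCount L i + 1) :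
    (∏ t, p ((Equiv.swap i j) (L t))) * p j = (∏ t, p (L t)) * p i := by
  have h1 : ∏ v, p (Equiv.swap i j v) ^ modeCount L v
      = ∏ v, p v ^ modeCount (Equiv.swap i j ∘ L) v :=
    Fintype.prod_equiv (Equiv.swap i j) _ _ (fun v => by
      rw [modeCount_swap_comp, Equiv.swap_apply_self])
  have h0 := prod_tuple_eq p (Equiv.swap i j ∘ L)
  simp only [Function.comp_apply] at h0
  rw [h0, ← h1, prod_tuple_eq p L]
  have hsub : ({i, j} : Finset (Fin k)) ⊆ univ := subset_univ _
  rw [← Finset.prod_sdiff hsub, ← Finset.prod_sdiff hsub]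
  have hagree : ∀ v ∈ univ \ {i, j},
      p (Equiv.swap i j v) ^ modeCount L v = p v ^ modeCount L v := by
    intro v hv
    simp only [Finset.mem_sdiff, Finset.mem_insert, Finset.mem_singleton, not_or] at hv
    rw [Equiv.swap_apply_of_ne_of_ne hv.2.1 hv.2.2]
  rw [Finset.prod_congr rfl hagree]
  rw [Finset.prod_pair hij, Finset.prod_pair hij]
  rw [Equiv.swap_apply_left, Equiv.swap_apply_right, hc, pow_succ]
  ring

/-- Transfer of (near-)mode status under the swap. -/
lemma swap_mem_modeSet {L : Fin n → Fin k} {i j : Fin k} (hi : i ∈ nearSet L)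
    (hj : j ∈ modeSet L) : i ∈ modeSet (Equiv.swap i j ∘ L) := by
  rw [mem_modeSet_swap, Equiv.swap_apply_left]
  exact hj

lemma swap_mem_nearSet {L : Fin n → Fin k} {i j : Fin k} (hi : i ∈ nearSet L)
    (hj : j ∈ modeSet L) : j ∈ nearSet (Equiv.swap i j ∘ L) := by
  have hc := nearSet_count hi hj
  obtain ⟨hni, hub⟩ := mem_nearSet.1 hi
  rw [mem_nearSet]
  constructor
  · rw [mem_modeSet_swap, Equiv.swap_apply_right]
    exact hni
  · intro j'
    rw [modeCount_swap_comp, modeCount_swap_comp, Equiv.swap_apply_right]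
    have := hub (Equiv.swap i j j')
    omega

/-- **The expected error of a uniformly random mode is non-increasing in the sample size.**
For every probability vector `p` on `Fin k` (with `q_j = 1 - p_j`) and every `n`,
`E[f(X_1,…,X_{n+1})] ≤ E[f(X_1,…,X_n)]` where the `X_i` are i.i.d. with law `p`. -/
theorem expected_mode_error_nonincreasing
    (k : ℕ) (hk : 0 < k) (p : Fin k → ℝ)
    (hp : ∀ j, 0 ≤ p j) (hsum : ∑ j, p j = 1) (n : ℕ) :
    ∑ L : Fin (n + 1) → Fin k, (∏ i, p (L i)) * modeErr (fun j => 1 - p j) L ≤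
      ∑ L : Fin n → Fin k, (∏ i, p (L i)) * modeErr (fun j => 1 - p j) L := by
  classical
  set Q : Fin k → ℝ := fun j => 1 - p j with hQ
  -- basic facts
  have hcard : ∀ L : Fin n → Fin k, (0:ℝ) < (modeSet L).card := by
    intro L
    have := Finset.card_pos.2 (modeSet_nonempty hk L)
    exact_mod_cast this
  have hprodnn : ∀ L : Fin n → Fin k, (0:ℝ) ≤ ∏ t, p (L t) :=
    fun L => Finset.prod_nonneg fun t _ => hp _
  -- rewrite the (n+1)-sum via Fin.cons
  have hLHS : ∑ L : Fin (n + 1) → Fin k, (∏ i, p (L i)) * modeErr Q L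
      = ∑ L : Fin n → Fin k, ∑ i : Fin k,
          ((∏ t, p (L t)) * p i) * modeErr Q (Fin.cons i L) := by
    rw [← Fintype.sum_equiv (Fin.consEquiv (fun _ => Fin k))
      (fun x => ((∏ t, p (x.2 t)) * p x.1) * modeErr Q (Fin.cons x.1 x.2))
      (fun L => (∏ i, p (L i)) * modeErr Q L) ?_]
    · rw [Fintype.sum_prod_type]
      exact Finset.sum_comm
    · rintro ⟨i, L⟩
      simp only [Fin.consEquiv_apply]
      congr 1
      rw [Fin.prod_univ_succ]
      simp [mul_comm]
  have hRHS : ∑ L : Fin n → Fin k, (∏ i, p (L i)) * modeErr Q L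
      = ∑ L : Fin n → Fin k, ∑ i : Fin k, ((∏ t, p (L t)) * p i) * modeErr Q L := by
    refine Finset.sum_congr rfl fun L _ => ?_
    rw [← Finset.sum_mul, ← Finset.mul_sum, hsum, mul_one]
  rw [hLHS, hRHS]
  -- the difference
  set D : (Fin n → Fin k) → Fin k → ℝ :=
    fun L i => ((∏ t, p (L t)) * p i) * (modeErr Q (Fin.cons i L) - modeErr Q L) with hD
  rw [← sub_nonpos, ← Finset.sum_sub_distrib]
  have hinner : ∀ L : Fin n → Fin k,
      (∑ i : Fin k, ((∏ t, p (L t)) * p i) * modeErr Q (Fin.cons i L))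
        - ∑ i : Fin k, ((∏ t, p (L t)) * p i) * modeErr Q L
      = (∑ i ∈ modeSet L, D L i) + ∑ i ∈ nearSet L, D L i := by
    intro L
    rw [← Finset.sum_sub_distrib]
    have h1 : ∑ i : Fin k, (((∏ t, p (L t)) * p i) * modeErr Q (Fin.cons i L)
        - ((∏ t, p (L t)) * p i) * modeErr Q L) = ∑ i : Fin k, D L i := by
      refine Finset.sum_congr rfl fun i _ => by simp only [hD]; ring
    rw [h1]
    have h2 : ∑ i : Fin k, D L i = ∑ i ∈ modeSet L ∪ nearSet L, D L i := by
      refine (Finset.sum_subset (Finset.subset_univ _) fun i _ hi => ?_).symm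
      have hm : i ∉ modeSet L := fun h => hi (Finset.mem_union_left _ h)
      have hn : i ∉ nearSet L := fun h => hi (Finset.mem_union_right _ h)
      simp only [hD]
      rw [modeErr_cons_of_far Q hm hn]
      ring
    rw [h2, Finset.sum_union]
    rw [Finset.disjoint_left]
    exact fun i hi hni => (mem_nearSet.1 hni).1 hi
  rw [Finset.sum_congr rfl fun L _ => hinner L, Finset.sum_add_distrib]
  -- Part 1 : the mode part is pointwise nonpositive
  have hT1 : ∑ L : Fin n → Fin k, ∑ i ∈ modeSet L, D L i ≤ 0 := by
    refine Finset.sum_nonpos fun L _ => ?_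
    have hs := hcard L
    have herr : ∀ i ∈ modeSet L, D L i
        = (∏ t, p (L t)) * (p i * (Q i - modeErr Q L)) := by
      intro i hi
      simp only [hD]
      rw [modeErr_cons_of_mem Q hi]
      ring
    rw [Finset.sum_congr rfl herr, ← Finset.mul_sum]
    refine mul_nonpos_of_nonneg_of_nonpos (hprodnn L) ?_
    have hcs : (∑ i ∈ modeSet L, p i)^2
        ≤ ((modeSet L).card : ℝ) * ∑ i ∈ modeSet L, (p i)^2 := by
      exact sq_sum_le_card_mul_sum_sq
    have hSQ : ∑ j ∈ modeSet L, Q j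
        = ((modeSet L).card : ℝ) - ∑ j ∈ modeSet L, p j := by
      simp only [hQ]
      rw [Finset.sum_sub_distrib, Finset.sum_const, nsmul_eq_mul, mul_one]
    have hmu : modeErr Q L = (((modeSet L).card : ℝ) - ∑ j ∈ modeSet L, p j)
        / ((modeSet L).card : ℝ) := by
      rw [modeErr, hSQ]
    have hsplit : ∑ i ∈ modeSet L, p i * (Q i - modeErr Q L)
        = ((∑ i ∈ modeSet L, p i) - ∑ i ∈ modeSet L, (p i)^2)
          - (∑ i ∈ modeSet L, p i) * modeErr Q L := by
      have hterm : ∀ i ∈ modeSet L, p i * (Q i - modeErr Q L)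
          = (p i - (p i)^2) - p i * modeErr Q L := fun i _ => by simp only [hQ]; ring
      rw [Finset.sum_congr rfl hterm, Finset.sum_sub_distrib, Finset.sum_sub_distrib,
        ← Finset.sum_mul]
    rw [hsplit, hmu, sub_nonpos, ← mul_div_assoc, le_div_iff₀ hs]
    nlinarith [hcs]
  -- Part 2 : the near-mode part vanishes by an involution
  have hT2 : ∑ L : Fin n → Fin k, ∑ i ∈ nearSet L, D L i = 0 := by
    set g : (Fin n → Fin k) × Fin k × Fin k → ℝ :=
      fun x => ((∏ t, p (x.1 t)) * p x.2.1) * (p x.2.2 - p x.2.1)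
        / (((modeSet x.1).card : ℝ) * (((modeSet x.1).card : ℝ) + 1)) with hg
    set S3 : Finset ((Fin n → Fin k) × Fin k × Fin k) :=
      Finset.univ.filter (fun x => x.2.1 ∈ nearSet x.1 ∧ x.2.2 ∈ modeSet x.1) with hS3
    have hDnear : ∀ L : Fin n → Fin k, ∀ i ∈ nearSet L,
        D L i = ∑ j ∈ modeSet L, g (L, i, j) := by
      intro L i hi
      have hs := hcard L
      have hSQ : ∑ j ∈ modeSet L, Q j
          = ((modeSet L).card : ℝ) - ∑ j ∈ modeSet L, p j := by
        simp only [hQ]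
        rw [Finset.sum_sub_distrib, Finset.sum_const, nsmul_eq_mul, mul_one]
      have hsum2 : ∑ j ∈ modeSet L, g (L, i, j)
          = ((∏ t, p (L t)) * p i) * ((∑ j ∈ modeSet L, p j)
              - ((modeSet L).card : ℝ) * p i)
            / (((modeSet L).card : ℝ) * (((modeSet L).card : ℝ) + 1)) := by
      -- pull constants out of the sum
        simp only [hg]
        rw [← Finset.sum_div, ← Finset.mul_sum, Finset.sum_sub_distrib,
          Finset.sum_const, nsmul_eq_mul]
      rw [hsum2]
      simp only [hD]
      rw [modeErr_cons_of_near Q hi, modeErr, hSQ]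
      simp only [hQ]
      have hs1 : ((modeSet L).card : ℝ) ≠ 0 := ne_of_gt hs
      have hs2 : ((modeSet L).card : ℝ) + 1 ≠ 0 := by positivity
      field_simp
      ring
    have hstep : ∑ L : Fin n → Fin k, ∑ i ∈ nearSet L, D L i = ∑ x ∈ S3, g x := by
      rw [hS3, Finset.sum_filter, Fintype.sum_prod_type]
      refine Finset.sum_congr rfl fun L _ => ?_
      rw [Fintype.sum_prod_type]
      have hrow : ∀ i : Fin k,
          (∑ j : Fin k, if i ∈ nearSet L ∧ j ∈ modeSet L then g (L, i, j) else 0)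
            = if i ∈ nearSet L then D L i else 0 := by
        intro i
        by_cases hi : i ∈ nearSet L
        · simp only [hi, true_and, if_true]
          rw [Finset.sum_ite_mem, Finset.univ_inter, hDnear L i hi]
        · simp [hi]
      rw [Finset.sum_congr rfl fun i _ => hrow i, Finset.sum_ite_mem, Finset.univ_inter]
    rw [hstep]
    refine Finset.sum_involution
      (fun x _ => (Equiv.swap x.2.1 x.2.2 ∘ x.1, x.2.2, x.2.1)) ?_ ?_ ?_ ?_
    · rintro ⟨L, i, j⟩ hx
      obtain ⟨-, hi, hj⟩ := Finset.mem_filter.1 hx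
      have hne : i ≠ j := nearSet_ne hi hj
      have hc : modeCount L j = modeCount L i + 1 := nearSet_count hi hj
      have hkey := prod_swap_key p hne hc
      simp only [hg, Function.comp_apply]
      rw [card_modeSet_swap, ← add_div, div_eq_zero_iff]
      left
      rw [hkey]
      ring
    · rintro ⟨L, i, j⟩ hx -
      obtain ⟨-, hi, hj⟩ := Finset.mem_filter.1 hx
      intro heq
      exact nearSet_ne hi hj (congrArg (fun y => y.2.1) heq).symm
    · rintro ⟨L, i, j⟩ hx
      obtain ⟨-, hi, hj⟩ := Finset.mem_filter.1 hx
      exact Finset.mem_filter.2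
        ⟨Finset.mem_univ _, swap_mem_nearSet hi hj, swap_mem_modeSet hi hj⟩
    · rintro ⟨L, i, j⟩ hx
      refine Prod.ext ?_ (Prod.ext rfl rfl)
      funext t
      simp only [Function.comp_apply]
      rw [Equiv.swap_comm]
      exact Equiv.swap_apply_self _ _ _
  linarith

end
end
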